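/- arXiv:1011.1062 — 5 statements merged into one kernel-verified Lean document; each statement's English description precedes it below -/
import Mathlib

section
/- If λ ≥ 0 (defocusing case) then for every nonzero integer ℓ the eigenvalues of G_ℓ are real, and hence all eigenvalues of i·G_ℓ are purely imaginary. -/
open Complex

lemma key_aux (A B C D : ℝ) (μ : ℂ) (hd : 0 < (A - D) ^ 2 + 4 * B * C)
    (h : ((A : ℂ) - μ) * ((D : ℂ) - μ) - (B : ℂ) * (C : ℂ) = 0) : μ.im = 0 := by
  have h1 := congrArg Complex.re h
  have h2 := congrArg Complex.im h
  simp [Complex.sub_re, Complex.sub_im, Complex.mul_re, Complex.mul_im,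
    Complex.ofReal_re, Complex.ofReal_im] at h1 h2
  by_contra hy
  have hsum : A + D - 2 * μ.re = 0 := by
    rcases mul_eq_zero.mp (show μ.im * (A + D - 2 * μ.re) = 0 by ring_nf; ring_nf at h2; linarith) with h' | h'
    · exact absurd h' hy
    · exact h'
  have hpos : 0 < μ.im ^ 2 := by positivity
  nlinarith [h1, hd, hsum, sq_nonneg (A + D - 2 * μ.re)]

lemma mat_eq (A B C D : ℂ) (μ : ℂ) :
    !![A, B; C, D] - μ • (1 : Matrix (Fin 2) (Fin 2) ℂ) = !![A - μ, B; C, D - μ] := by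
  ext i j
  fin_cases i <;> fin_cases j <;>
    simp [Matrix.one_apply, Matrix.sub_apply, Matrix.smul_apply]

lemma mat_eq' (A B C D : ℂ) (μ : ℂ) :
    Complex.I • !![A, B; C, D] - μ • (1 : Matrix (Fin 2) (Fin 2) ℂ)
      = !![Complex.I * A - μ, Complex.I * B; Complex.I * C, Complex.I * D - μ] := by
  ext i j
  fin_cases i <;> fin_cases j <;>
    simp [Matrix.one_apply, Matrix.sub_apply, Matrix.smul_apply]

/-- In the defocusing case `λ ≥ 0`, for every nonzero integer `ℓ` the eigenvalues of
`G_ℓ` are real, and hence all eigenvalues of `i·G_ℓ` are purely imaginary. -/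
theorem stmt_5 (a : ℂ) (k lam : ℝ) (hlam : 0 ≤ lam) (l : ℤ) (hl : l ≠ 0) :
    (∀ μ : ℂ,
      Matrix.det
        (!![((-(l : ℝ) ^ 2 - 2 * k * (l : ℝ) - lam * ‖a‖ ^ 2 : ℝ) : ℂ),
              ((-(lam * ‖a‖ ^ 2) : ℝ) : ℂ);
            ((lam * ‖a‖ ^ 2 : ℝ) : ℂ),
              (((l : ℝ) ^ 2 - 2 * k * (l : ℝ) + lam * ‖a‖ ^ 2 : ℝ) : ℂ)]
          - μ • (1 : Matrix (Fin 2) (Fin 2) ℂ)) = 0 → μ.im = 0)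
    ∧ (∀ μ : ℂ,
      Matrix.det
        (Complex.I •
            !![((-(l : ℝ) ^ 2 - 2 * k * (l : ℝ) - lam * ‖a‖ ^ 2 : ℝ) : ℂ),
                ((-(lam * ‖a‖ ^ 2) : ℝ) : ℂ);
              ((lam * ‖a‖ ^ 2 : ℝ) : ℂ),
                (((l : ℝ) ^ 2 - 2 * k * (l : ℝ) + lam * ‖a‖ ^ 2 : ℝ) : ℂ)]
          - μ • (1 : Matrix (Fin 2) (Fin 2) ℂ)) = 0 → μ.re = 0) := by
  set L : ℝ := (l : ℝ) with hLdef
  set m : ℝ := lam * ‖a‖ ^ 2 with hm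
  set A : ℝ := -L ^ 2 - 2 * k * L - m with hA
  set D : ℝ := L ^ 2 - 2 * k * L + m with hD
  have hm0 : 0 ≤ m := by positivity
  have hL0 : L ≠ 0 := by rw [hLdef]; exact_mod_cast hl
  have hL2 : 0 < L ^ 2 := by positivity
  have hd : 0 < (A - D) ^ 2 + 4 * (-m) * m := by
    rw [hA, hD]; nlinarith
  have main : ∀ μ : ℂ,
      Matrix.det
        (!![((A : ℝ) : ℂ), ((-m : ℝ) : ℂ); ((m : ℝ) : ℂ), ((D : ℝ) : ℂ)]
          - μ • (1 : Matrix (Fin 2) (Fin 2) ℂ)) = 0 → μ.im = 0 := by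
    intro μ hdet
    rw [mat_eq, Matrix.det_fin_two_of] at hdet
    exact key_aux A (-m) m D μ hd (by push_cast at hdet ⊢; linear_combination hdet)
  refine ⟨main, ?_⟩
  intro μ hdet
  rw [mat_eq', Matrix.det_fin_two_of] at hdet
  have h2 : Matrix.det
      (!![((A : ℝ) : ℂ), ((-m : ℝ) : ℂ); ((m : ℝ) : ℂ), ((D : ℝ) : ℂ)]
        - (-Complex.I * μ) • (1 : Matrix (Fin 2) (Fin 2) ℂ)) = 0 := by
    rw [mat_eq, Matrix.det_fin_two_of]
    have hI : Complex.I * Complex.I = -1 := Complex.I_mul_I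
    push_cast at hdet ⊢
    linear_combination (-1 : ℂ) * hdet + (μ ^ 2 + ((A : ℝ) : ℂ) * ((D : ℝ) : ℂ) + ((m : ℝ) : ℂ) ^ 2) * hI
  have := main (-Complex.I * μ) h2
  simpa using this
end

section
/- The continuous plane wave V^n(x) = a·exp(i(kx − ωnτ)) satisfies the Besse scheme (with φ^{n+1/2} = |a|², obtained from (φ^{n+1/2} + φ^{n−1/2})/2 = |V^n|² with initial value |a|²): (i/τ)(V^{n+1} − V^n) + (V^{n+1}_{xx} + V^n_{xx})/2 = λ·φ^{n+1/2}·(V^{n+1} + V^n)/2, if and only if tan(ωτ/2) = (1/2)(λτ|a|² + τk²). -/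
open Complex

lemma hasDerivAt_cexp_mul (c b : ℂ) (x : ℝ) :
    HasDerivAt (fun y : ℝ => c * Complex.exp (b * y)) (c * b * Complex.exp (b * x)) x := by
  have h1 : HasDerivAt (fun z : ℂ => c * Complex.exp (b * z)) (c * b * Complex.exp (b * x)) (x : ℂ) := by
    have := ((Complex.hasDerivAt_exp (b * x)).comp (x : ℂ)
      ((hasDerivAt_id (x : ℂ)).const_mul b)).const_mul c
    simpa [mul_comm, mul_assoc, mul_left_comm] using this
  exact h1.comp_ofReal

lemma iteratedDeriv_two_cexp (c b : ℂ) (x : ℝ) :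
    iteratedDeriv 2 (fun y : ℝ => c * Complex.exp (b * y)) x
      = c * b ^ 2 * Complex.exp (b * x) := by
  have hd : deriv (fun y : ℝ => c * Complex.exp (b * y))
      = fun y : ℝ => (c * b) * Complex.exp (b * y) := by
    funext y
    exact (hasDerivAt_cexp_mul c b y).deriv
  rw [iteratedDeriv_succ, iteratedDeriv_succ, iteratedDeriv_zero, hd]
  rw [(hasDerivAt_cexp_mul (c * b) b x).deriv]; ring

/-- The continuous plane wave `V^n(x) = a·exp(i(kx − ωnτ))` (with `φ^{n+1/2} = |a|²`)
satisfies the Besse scheme if and only if `tan(ωτ/2) = (1/2)(λτ|a|² + τk²)`. -/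
theorem stmt_7 (a : ℂ) (ha : a ≠ 0) (k ω lam τ : ℝ) (hτ : 0 < τ)
    (hcos : Real.cos (ω * τ / 2) ≠ 0) (V : ℤ → ℝ → ℂ)
    (hV : ∀ (n : ℤ) (x : ℝ), V n x = a * Complex.exp (Complex.I * ((k * x - ω * (n : ℝ) * τ : ℝ) : ℂ))) :
    (∀ (n : ℤ) (x : ℝ),
      (Complex.I / (τ : ℂ)) * (V (n + 1) x - V n x)
        + (iteratedDeriv 2 (V (n + 1)) x + iteratedDeriv 2 (V n) x) / 2
      = (lam : ℂ) * ((‖a‖ ^ 2 : ℝ) : ℂ) * ((V (n + 1) x + V n x) / 2))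
    ↔ Real.tan (ω * τ / 2) = (1 / 2) * (lam * τ * ‖a‖ ^ 2 + τ * k ^ 2) := by
  set b : ℝ := ‖a‖ ^ 2 with hb
  have hτ0 : (τ : ℂ) ≠ 0 := by exact_mod_cast hτ.ne'
  set s := Real.sin (ω * τ / 2) with hs
  set c := Real.cos (ω * τ / 2) with hcdef
  have hc : ∀ n : ℤ, V n = fun x : ℝ =>
      (a * Complex.exp (-(I * ((ω : ℂ) * (n : ℤ) * τ)))) * Complex.exp ((I * k) * x) := by
    intro n; funext x
    rw [hV n x, mul_assoc a, ← Complex.exp_add]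
    congr 2
    push_cast
    ring
  have hD : ∀ (n : ℤ) (x : ℝ), iteratedDeriv 2 (V n) x = -((k : ℂ)^2) * V n x := by
    intro n x
    rw [hc n, iteratedDeriv_two_cexp]
    simp only []
    rw [mul_pow, I_sq]
    ring
  set E : ℂ := Complex.exp (-(I * ((ω : ℂ) * τ))) with hEdef
  have hstep : ∀ (n : ℤ) (x : ℝ), V (n + 1) x = E * V n x := by
    intro n x
    rw [hV (n + 1) x, hV n x, hEdef, mul_left_comm, ← Complex.exp_add]
    congr 2
    push_cast
    ring
  have hne : ∀ (n : ℤ) (x : ℝ), V n x ≠ 0 := by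
    intro n x; rw [hV]; exact mul_ne_zero ha (Complex.exp_ne_zero _)
  have hEexp : E = ((c : ℂ) * c * 2 - 1) - (2 * (s : ℂ) * (c : ℂ)) * I := by
    rw [hEdef]
    have h1 : -(I * ((ω : ℂ) * τ)) = ((-(ω * τ) : ℝ) : ℂ) * I := by push_cast; ring
    rw [h1, Complex.exp_mul_I, ← Complex.ofReal_cos, ← Complex.ofReal_sin]
    have h2 : Real.cos (-(ω * τ)) = 2 * c ^ 2 - 1 := by
      rw [Real.cos_neg, show ω * τ = 2 * (ω * τ / 2) by ring, Real.cos_two_mul]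
    have h3 : Real.sin (-(ω * τ)) = -(2 * s * c) := by
      rw [Real.sin_neg, show ω * τ = 2 * (ω * τ / 2) by ring, Real.sin_two_mul]
    rw [h2, h3]
    push_cast
    ring
  have hP : (s : ℂ)^2 + (c : ℂ)^2 = 1 := by
    exact_mod_cast Real.sin_sq_add_cos_sq (ω * τ / 2)
  have key : ∀ (n : ℤ) (x : ℝ),
      ((Complex.I / (τ : ℂ)) * (V (n + 1) x - V n x)
        + (iteratedDeriv 2 (V (n + 1)) x + iteratedDeriv 2 (V n) x) / 2
      = (lam : ℂ) * (b : ℂ) * ((V (n + 1) x + V n x) / 2))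
      ↔ ((I / (τ : ℂ)) * (E - 1) + (-((k:ℂ)^2)) * (E + 1) / 2
          = (lam : ℂ) * (b : ℂ) * ((E + 1) / 2)) := by
    intro n x
    rw [hD, hD, hstep]
    constructor
    · intro h
      apply mul_right_cancel₀ (hne n x)
      linear_combination h
    · intro h
      linear_combination V n x * h
  have scalar_iff : ((I / (τ : ℂ)) * (E - 1) + (-((k:ℂ)^2)) * (E + 1) / 2
          = (lam : ℂ) * (b : ℂ) * ((E + 1) / 2))
      ↔ (2 * s = τ * (lam * b + k ^ 2) * c) := by
    rw [hEexp]
    constructor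
    · intro h
      field_simp [hτ0] at h
      have h1 := congrArg Complex.re h
      simp [← Complex.ofReal_pow] at h1
      apply mul_right_cancel₀ hcos
      show 2 * s * c = τ * (lam * b + k ^ 2) * c * c
      nlinarith [h1]
    · intro h
      have hC : 2 * (s : ℂ) = (τ : ℂ) * ((lam : ℂ) * (b : ℂ) + (k : ℂ)^2) * (c : ℂ) := by
        exact_mod_cast h
      have hP' : (s : ℂ) * s + (c : ℂ) * c = 1 := by
        linear_combination hP
      field_simp [hτ0]
      linear_combination (2 * (c : ℂ) - 2 * I * (s : ℂ)) * hC + 4 * I * hP'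
        + (-4 * (c : ℂ) * (s : ℂ)) * Complex.I_sq
  have tan_iff : (Real.tan (ω * τ / 2) = (1 / 2) * (lam * τ * b + τ * k ^ 2))
      ↔ (2 * s = τ * (lam * b + k ^ 2) * c) := by
    rw [Real.tan_eq_sin_div_cos, ← hs, ← hcdef, div_eq_iff hcos]
    constructor
    · intro h
      linear_combination 2 * h
    · intro h
      linear_combination (1/2) * h
  rw [tan_iff]
  constructor
  · intro h
    exact (scalar_iff).mp ((key 0 0).mp (h 0 0))
  · intro h n x
    exact (key n x).mpr ((scalar_iff).mpr h)
end

section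
/- In the limit h → 0 and k = 0, for λ|a|² > 1/2 and ℓ = 1, the root of largest modulus of the Fei stability polynomial satisfies z* = −(1 + τ·ℓ·√(2λ|a|² − ℓ²)) + O(τ²) as τ → 0; in particular |z*| = 1 + τ√(2λ|a|² − 1) + O(τ²) > 1 for small τ. -/
open Complex ComplexConjugate

/-- `c = e^{−iωτ}(i − ℓ²τ − q)` with `ℓ = 1`, `q = λτ|a|²` and `ω` given by the
dispersion relation `tan(ωτ) = q` (so `ωτ = arctan q`), for the Fei scheme with
`k = 0` in the limit `h → 0`. -/
noncomputable def fei12C (lam : ℝ) (a : ℂ) (τ : ℝ) : ℂ :=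
  Complex.exp (-Complex.I * ((Real.arctan (lam * τ * (‖a‖) ^ 2) : ℝ) : ℂ)) *
    (Complex.I - ((1 ^ 2 * τ + lam * τ * (‖a‖) ^ 2 : ℝ) : ℂ))

/-- The Fei stability polynomial for `k = 0`, `h → 0`, `ℓ = 1`:
`p(z) = |c|²z⁴ − b(c + conj c)z³ + (c² + conj(c)²)z² − b(c + conj c)z + |c|²`,
with `b = 2q·cos(ωτ)`. -/
noncomputable def fei12P (lam : ℝ) (a : ℂ) (τ : ℝ) (z : ℂ) : ℂ :=
  fei12C lam a τ * conj (fei12C lam a τ) * z ^ 4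
    - ((2 * (lam * τ * (‖a‖) ^ 2) *
          Real.cos (Real.arctan (lam * τ * (‖a‖) ^ 2)) : ℝ) : ℂ) *
        (fei12C lam a τ + conj (fei12C lam a τ)) * z ^ 3
    + (fei12C lam a τ ^ 2 + conj (fei12C lam a τ) ^ 2) * z ^ 2
    - ((2 * (lam * τ * (‖a‖) ^ 2) *
          Real.cos (Real.arctan (lam * τ * (‖a‖) ^ 2)) : ℝ) : ℂ) *
        (fei12C lam a τ + conj (fei12C lam a τ)) * z
    + fei12C lam a τ * conj (fei12C lam a τ)

set_option maxHeartbeats 2000000 in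
/-- For `k = 0`, `h → 0`, `λ|a|² > 1/2` and `ℓ = 1`, the maximal-modulus root of the
Fei stability polynomial satisfies `z* = −(1 + τ√(2λ|a|² − 1)) + O(τ²)` as `τ → 0`;
in particular `|z*| > 1` for small `τ`. -/
theorem stmt_12 (a : ℂ) (ha : a ≠ 0) (lam : ℝ)
    (hlam : 1 / 2 < lam * (‖a‖) ^ 2) :
    ∃ C > (0 : ℝ), ∃ τ₀ > (0 : ℝ), ∀ τ : ℝ, 0 < τ → τ < τ₀ →
      ∃ z : ℂ, fei12P lam a τ z = 0
        ∧ (∀ w : ℂ, fei12P lam a τ w = 0 → ‖w‖ ≤ ‖z‖)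
        ∧ ‖z - ((-(1 + τ * Real.sqrt (2 * lam * (‖a‖) ^ 2 - 1)) : ℝ) : ℂ)‖
            ≤ C * τ ^ 2
        ∧ 1 < ‖z‖ := by
  have hμ : (1:ℝ)/2 < lam * (‖a‖)^2 := hlam
  obtain ⟨μ, hμdef⟩ : ∃ _x : ℝ, _x = lam * (‖a‖)^2 := ⟨_, rfl⟩
  rw [show lam * (‖a‖)^2 = μ from hμdef.symm] at hμ
  have hμ0 : 0 < μ := by linarith
  have hm0 : 0 < 2*μ - 1 := by linarith
  obtain ⟨K₁, hK₁⟩ : ∃ _x : ℝ, _x = μ*(1+μ) := ⟨_, rfl⟩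
  have hK₁0 : 0 < K₁ := by rw [hK₁]; exact mul_pos hμ0 (by linarith)
  obtain ⟨K₂, hK₂⟩ : ∃ _x : ℝ, _x = 2*K₁ + K₁^2 := ⟨_, rfl⟩
  have hK₂0 : 0 < K₂ := by rw [hK₂]; have := pow_pos hK₁0 2; linarith
  obtain ⟨K₃, hK₃⟩ : ∃ _x : ℝ, _x = 1 + K₂ := ⟨_, rfl⟩
  have hK₃0 : 0 < K₃ := by rw [hK₃]; linarith
  obtain ⟨K₄, hK₄⟩ : ∃ _x : ℝ, _x = μ^2 + K₃ + K₂ + K₃*K₂ := ⟨_, rfl⟩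
  have hK₄0 : 0 < K₄ := by
    rw [hK₄]; have := pow_pos hμ0 2; have := mul_pos hK₃0 hK₂0; linarith
  obtain ⟨K₅, hK₅⟩ : ∃ _x : ℝ, _x = 2*μ^2 + 2*μ*K₄ + K₃ := ⟨_, rfl⟩
  have hK₅0 : 0 < K₅ := by
    rw [hK₅]; have := pow_pos hμ0 2; have := mul_pos hμ0 hK₄0; linarith
  obtain ⟨sm, hsmdef⟩ : ∃ _x : ℝ, _x = Real.sqrt (2*μ-1) := ⟨_, rfl⟩
  have hsm0 : 0 < sm := hsmdef ▸ Real.sqrt_pos.mpr hm0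
  have hsm2 : sm^2 = 2*μ-1 := by rw [hsmdef]; exact Real.sq_sqrt hm0.le
  have hC0 : 0 < μ + K₄ + K₃ + K₅/sm + sm*K₃ + 1 := by
    have := div_pos hK₅0 hsm0
    have := mul_pos hsm0 hK₃0
    linarith
  have hτ₀0 : 0 < min 1 (min (1/(2*μ+1)) ((2*μ-1)/K₃)) :=
    lt_min one_pos (lt_min (div_pos one_pos (by linarith)) (div_pos hm0 hK₃0))
  refine ⟨μ + K₄ + K₃ + K₅/sm + sm*K₃ + 1, hC0,
    min 1 (min (1/(2*μ+1)) ((2*μ-1)/K₃)), hτ₀0, ?_⟩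
  intro τ hτ0 hττ0
  have hτ1 : τ ≤ 1 := le_of_lt (lt_of_lt_of_le hττ0 (min_le_left _ _))
  have hτa : τ ≤ 1/(2*μ+1) :=
    le_of_lt (lt_of_lt_of_le hττ0 (le_trans (min_le_right _ _) (min_le_left _ _)))
  have hτb : K₃*τ ≤ 2*μ-1 := by
    have h : τ ≤ (2*μ-1)/K₃ :=
      le_of_lt (lt_of_lt_of_le hττ0 (le_trans (min_le_right _ _) (min_le_right _ _)))
    have h2 := mul_le_mul_of_nonneg_left h hK₃0.le
    rw [mul_div_cancel₀ _ (ne_of_gt hK₃0)] at h2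
    exact h2
  have hτsq : τ^2 ≤ τ := by
    have h := mul_le_mul_of_nonneg_left hτ1 hτ0.le
    calc τ^2 = τ*τ := by ring
      _ ≤ τ*1 := h
      _ = τ := mul_one τ
  have hτ21 : τ^2 ≤ 1 := le_trans hτsq hτ1
  have hτc : τ*(2*μ+1) ≤ 1 := by
    rw [le_div_iff₀ (by linarith : (0:ℝ) < 2*μ+1)] at hτa; linarith
  have h1 : μ*τ ≤ 1/2 := by linarith [hτc, hτ0]
  have hτμ : 2*μ^2*τ^2 ≤ 1 := by
    have h2 : (μ*τ)*(μ*τ) ≤ (1/2)*(1/2) :=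
      mul_le_mul h1 h1 (mul_nonneg hμ0.le hτ0.le) (by norm_num)
    linarith [h2]
  -- real quantities
  obtain ⟨q, hqdef⟩ : ∃ _x : ℝ, _x = lam * τ * (‖a‖)^2 := ⟨_, rfl⟩
  have hq : q = μ*τ := by rw [hqdef, hμdef]; ring
  have hq0 : 0 < q := by rw [hq]; exact mul_pos hμ0 hτ0
  obtain ⟨θ, hθ⟩ : ∃ _x : ℝ, _x = Real.arctan q := ⟨_, rfl⟩
  obtain ⟨K, hKdef⟩ : ∃ _x : ℝ, _x = Real.cos θ := ⟨_, rfl⟩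
  have hK0 : 0 < K := by rw [hKdef, hθ]; exact Real.cos_arctan_pos q
  obtain ⟨P, hP⟩ : ∃ _x : ℝ, _x = 1 + (τ + q)*q := ⟨_, rfl⟩
  have hPval : P = 1 + K₁*τ^2 := by rw [hP, hq, hK₁]; ring
  have hP1 : 1 ≤ P := by
    rw [hP]; have := mul_pos (by linarith : (0:ℝ) < τ + q) hq0; linarith
  have hP21 : 1 ≤ P^2 := by
    have h2 := mul_le_mul hP1 hP1 zero_le_one (by linarith)
    calc (1:ℝ) = 1*1 := by ring
      _ ≤ P*P := h2
      _ = P^2 := by ring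
  have hP2ub : P^2 ≤ 1 + K₂*τ^2 := by
    have h4 : (K₁*τ)^2*τ^2 ≤ (K₁*τ)^2*1 := mul_le_mul_of_nonneg_left hτ21 (sq_nonneg _)
    rw [hPval, hK₂]; linarith [h4]
  obtain ⟨A, hA⟩ : ∃ _x : ℝ, _x = τ^2 + P^2 := ⟨_, rfl⟩
  have hA1 : 1 ≤ A := by rw [hA]; have := sq_nonneg τ; linarith
  have hA0 : 0 < A := by linarith
  have hAub : A ≤ 1 + K₃*τ^2 := by rw [hA, hK₃]; linarith [hP2ub, sq_nonneg τ]
  obtain ⟨R, hRdef⟩ : ∃ _x : ℝ, _x = Real.sqrt (q^2*τ^2 + A*P^2) := ⟨_, rfl⟩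
  have hSnn : (0:ℝ) ≤ q^2*τ^2 + A*P^2 :=
    add_nonneg (by positivity) (mul_nonneg hA0.le (sq_nonneg _))
  have hR2 : R^2 = q^2*τ^2 + A*P^2 := by rw [hRdef]; exact Real.sq_sqrt hSnn
  have hR0 : 0 ≤ R := hRdef ▸ Real.sqrt_nonneg _
  have hAP1 : (1:ℝ) ≤ A*P^2 := by
    calc (1:ℝ) = 1*1 := by ring
      _ ≤ A*P^2 := mul_le_mul hA1 hP21 zero_le_one (by linarith)
  have hR1 : 1 ≤ R := by
    have h5 : (1:ℝ) ≤ q^2*τ^2 + A*P^2 := by linarith [hAP1, sq_nonneg (q*τ)]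
    calc (1:ℝ) = Real.sqrt 1 := Real.sqrt_one.symm
      _ ≤ Real.sqrt (q^2*τ^2 + A*P^2) := Real.sqrt_le_sqrt h5
      _ = R := hRdef.symm
  have hq2τ2 : q^2*τ^2 ≤ μ^2*τ^2 := by
    have h4 : (μ*τ)^2*τ^2 ≤ (μ*τ)^2*1 := mul_le_mul_of_nonneg_left hτ21 (sq_nonneg _)
    rw [hq]; linarith [h4]
  have hτ4 : τ^2*τ^2 ≤ τ^2 := by
    calc τ^2*τ^2 ≤ τ^2*1 := mul_le_mul_of_nonneg_left hτ21 (sq_nonneg τ)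
      _ = τ^2 := mul_one _
  have hAPub : A*P^2 ≤ (1+K₃*τ^2)*(1+K₂*τ^2) :=
    mul_le_mul hAub hP2ub (sq_nonneg P)
      (by linarith [mul_nonneg hK₃0.le (sq_nonneg τ)])
  have hR2ub : R^2 ≤ 1 + K₄*τ^2 := by
    have hKK : K₃*K₂*(τ^2*τ^2) ≤ K₃*K₂*τ^2 :=
      mul_le_mul_of_nonneg_left hτ4 (mul_pos hK₃0 hK₂0).le
    rw [hK₄]; linarith [hR2, hAPub, hq2τ2, hKK]
  have hRub : R ≤ 1 + K₄*τ^2 := by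
    have hcnn : (0:ℝ) ≤ K₄*τ^2 := mul_nonneg hK₄0.le (sq_nonneg τ)
    have h6 : q^2*τ^2 + A*P^2 ≤ (1+K₄*τ^2)^2 := by
      linarith [hR2, hR2ub, hcnn, sq_nonneg (K₄*τ^2)]
    calc R = Real.sqrt (q^2*τ^2+A*P^2) := hRdef
      _ ≤ Real.sqrt ((1+K₄*τ^2)^2) := Real.sqrt_le_sqrt h6
      _ = 1+K₄*τ^2 := Real.sqrt_sq (by linarith)
  obtain ⟨g, hg⟩ : ∃ _x : ℝ, _x = 2*μ^2*τ^2 + 2*μ*R - A := ⟨_, rfl⟩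
  have hK₃τ2 : K₃*τ^2 ≤ K₃*τ := mul_le_mul_of_nonneg_left hτsq hK₃0.le
  have h2μRlb : 2*μ*1 ≤ 2*μ*R := mul_le_mul_of_nonneg_left hR1 (by linarith)
  have h2μRub : 2*μ*R ≤ 2*μ*(1+K₄*τ^2) := mul_le_mul_of_nonneg_left hRub (by linarith)
  have hg0 : 0 ≤ g := by
    rw [hg]; linarith [h2μRlb, hAub, hK₃τ2, hτb, sq_nonneg (μ*τ)]
  have hgub : g - (2*μ-1) ≤ K₅*τ^2 := by
    rw [hg, hK₅]
    linarith [h2μRub, hA1, mul_nonneg hK₃0.le (sq_nonneg τ)]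
  have hglb : -(K₅*τ^2) ≤ g - (2*μ-1) := by
    rw [hg, hK₅]
    linarith [h2μRlb, hAub, sq_nonneg (μ*τ),
      mul_nonneg (mul_pos hμ0 hK₄0).le (sq_nonneg τ), sq_nonneg μ]
  obtain ⟨sg, hsgdef⟩ : ∃ _x : ℝ, _x = Real.sqrt g := ⟨_, rfl⟩
  have hsg0 : 0 ≤ sg := hsgdef ▸ Real.sqrt_nonneg _
  have hsg2 : sg^2 = g := by rw [hsgdef]; exact Real.sq_sqrt hg0
  obtain ⟨W₁, hW₁⟩ : ∃ _x : ℝ, _x = -(2*q*τ) - 2*R := ⟨_, rfl⟩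
  obtain ⟨W₂, hW₂⟩ : ∃ _x : ℝ, _x = -(2*q*τ) + 2*R := ⟨_, rfl⟩
  obtain ⟨z₁, hz₁⟩ : ∃ _x : ℝ, _x = -((q*τ + R + τ*sg)/A) := ⟨_, rfl⟩
  obtain ⟨z₂, hz₂⟩ : ∃ _x : ℝ, _x = -((q*τ + R - τ*sg)/A) := ⟨_, rfl⟩
  obtain ⟨x, hx⟩ : ∃ _x : ℝ, _x = W₂/(2*A) := ⟨_, rfl⟩
  have hqτA : q*τ ≤ A := by
    have h7 : (μ*τ)*τ ≤ (1/2)*1 := mul_le_mul h1 hτ1 hτ0.le (by norm_num)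
    rw [hq]; linarith [h7]
  have hRA2 : R ≤ A + q*τ := by
    by_contra hcon
    push_neg at hcon
    have h8 : (A + q*τ)^2 < R^2 :=
      pow_lt_pow_left₀ hcon (le_of_lt (by linarith [mul_pos hq0 hτ0] : (0:ℝ) < A + q*τ)) (by norm_num)
    have h9 : A*P^2 ≤ A*A := mul_le_mul_of_nonneg_left (by linarith [hA, sq_nonneg τ]) hA0.le
    linarith [hR2, h8, h9, mul_nonneg (mul_nonneg hA0.le hq0.le) hτ0.le]
  have hW₂sq : W₂^2 ≤ (2*A)^2 := by
    rw [hW₂]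
    have hl : -(2*A) ≤ -(2*q*τ) + 2*R := by linarith [hR0, hqτA]
    have hu : -(2*q*τ) + 2*R ≤ 2*A := by linarith [hRA2, mul_pos hq0 hτ0]
    exact sq_le_sq' hl hu
  have hx2 : x^2 ≤ 1 := by
    rw [hx, div_pow, div_le_one (by positivity)]
    exact hW₂sq
  obtain ⟨y, hy⟩ : ∃ _x : ℝ, _x = Real.sqrt (1 - x^2) := ⟨_, rfl⟩
  have hy0 : 0 ≤ y := hy ▸ Real.sqrt_nonneg _
  have hy2 : y^2 = 1 - x^2 := by rw [hy]; exact Real.sq_sqrt (by linarith)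
  obtain ⟨ζ, hζ⟩ : ∃ _x : ℂ, _x = (x:ℂ) + (y:ℂ)*Complex.I := ⟨_, rfl⟩
  -- complex identities
  have hc : fei12C lam a τ = (K:ℂ) * (-(τ:ℂ) + (P:ℂ)*Complex.I) := by
    unfold fei12C
    rw [← hqdef, ← hθ]
    rw [show -Complex.I * ((θ:ℝ):ℂ) = ((-θ:ℝ):ℂ) * Complex.I by push_cast; ring,
      Complex.exp_mul_I, ← Complex.ofReal_cos, ← Complex.ofReal_sin,
      Real.cos_neg, Real.sin_neg,
      show Real.sin θ = q * Real.cos θ by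
        rw [hθ, Real.sin_arctan, Real.cos_arctan]; ring,
      ← hKdef, hP]
    push_cast
    linear_combination (-(q:ℂ) * (K:ℂ)) * Complex.I_sq
  have hcc : fei12C lam a τ * conj (fei12C lam a τ) = ((K^2*A : ℝ):ℂ) := by
    rw [hc, hA]
    simp only [map_mul, map_add, map_sub, map_neg, Complex.conj_ofReal, Complex.conj_I]
    push_cast
    linear_combination (-(K:ℂ)^2*(P:ℂ)^2) * Complex.I_sq
  have hcs : fei12C lam a τ + conj (fei12C lam a τ) = ((K*(-2*τ) : ℝ):ℂ) := by
    rw [hc]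
    simp only [map_mul, map_add, map_sub, map_neg, Complex.conj_ofReal, Complex.conj_I]
    push_cast; ring
  have hc2 : fei12C lam a τ^2 + conj (fei12C lam a τ)^2 = ((K^2*(2*(τ^2-P^2)) : ℝ):ℂ) := by
    rw [hc]
    simp only [map_mul, map_add, map_sub, map_neg, Complex.conj_ofReal, Complex.conj_I]
    push_cast
    linear_combination (2*(K:ℂ)^2*(P:ℂ)^2) * Complex.I_sq
  have hp : ∀ z : ℂ, fei12P lam a τ z
      = ((K^2:ℝ):ℂ) * (((A:ℝ):ℂ)*z^4 + ((4*q*τ:ℝ):ℂ)*z^3 + ((2*(τ^2-P^2):ℝ):ℂ)*z^2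
          + ((4*q*τ:ℝ):ℂ)*z + ((A:ℝ):ℂ)) := by
    intro z
    unfold fei12P
    rw [← hqdef, ← hθ, ← hKdef, hcc, hcs, hc2]
    push_cast
    ring
  have hKne : ((K:ℝ):ℂ) ≠ 0 := by exact_mod_cast ne_of_gt hK0
  have hAne : ((A:ℝ):ℂ) ≠ 0 := by exact_mod_cast ne_of_gt hA0
  have hfac : ∀ z:ℂ, ((A:ℝ):ℂ) * (((A:ℝ):ℂ)*z^4 + ((4*q*τ:ℝ):ℂ)*z^3 + ((2*(τ^2-P^2):ℝ):ℂ)*z^2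
          + ((4*q*τ:ℝ):ℂ)*z + ((A:ℝ):ℂ))
      = (((A:ℝ):ℂ)*z^2 - ((W₁:ℝ):ℂ)*z + ((A:ℝ):ℂ)) * (((A:ℝ):ℂ)*z^2 - ((W₂:ℝ):ℂ)*z + ((A:ℝ):ℂ)) := by
    intro z
    have hR2' : R^2 = q^2*τ^2 + (τ^2+P^2)*P^2 := by rw [hR2, hA]
    have hR2c : ((R:ℝ):ℂ)^2 = ((q:ℝ):ℂ)^2*((τ:ℝ):ℂ)^2 + (((τ:ℝ):ℂ)^2+((P:ℝ):ℂ)^2)*((P:ℝ):ℂ)^2 := by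
      exact_mod_cast hR2'
    rw [hA, hW₁, hW₂]
    push_cast
    linear_combination (4*z^2) * hR2c
  have hnum : (q*τ + R + τ*sg)*(q*τ + R - τ*sg) = A^2 := by
    linear_combination (-(τ^2))*hsg2 + (-(τ^2))*hg + hR2 + (-A)*hA + (2*τ^2*(q+μ*τ)+2*τ*R)*hq
  have hz₁z₂ : z₁ * z₂ = 1 := by
    rw [hz₁, hz₂]
    field_simp
    linear_combination hnum
  have hz₁s : A*(z₁ + z₂) = W₁ := by
    rw [hz₁, hz₂, hW₁]; field_simp; ring
  have hq1fac : ∀ zz:ℂ, ((A:ℝ):ℂ)*zz^2 - ((W₁:ℝ):ℂ)*zz + ((A:ℝ):ℂ)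
      = ((A:ℝ):ℂ)*(zz - ((z₁:ℝ):ℂ))*(zz - ((z₂:ℝ):ℂ)) := by
    intro zz
    have h1' : ((A:ℝ):ℂ)*(((z₁:ℝ):ℂ) + ((z₂:ℝ):ℂ)) = ((W₁:ℝ):ℂ) := by exact_mod_cast hz₁s
    have h2' : ((z₁:ℝ):ℂ)*((z₂:ℝ):ℂ) = 1 := by exact_mod_cast hz₁z₂
    linear_combination zz*h1' - ((A:ℝ):ℂ)*h2'
  have hζsum : ((A:ℝ):ℂ) * (ζ + conj ζ) = ((W₂:ℝ):ℂ) := by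
    rw [hζ]
    simp only [map_add, map_mul, Complex.conj_ofReal, Complex.conj_I]
    rw [show (x:ℂ) + (y:ℂ)*Complex.I + ((x:ℂ) + (y:ℂ)*(-Complex.I)) = 2*(x:ℂ) by ring, hx]
    push_cast
    field_simp
  have hζprod : ζ * conj ζ = 1 := by
    rw [hζ]
    simp only [map_add, map_mul, Complex.conj_ofReal, Complex.conj_I]
    have hy2c : ((y:ℝ):ℂ)^2 = 1 - ((x:ℝ):ℂ)^2 := by exact_mod_cast hy2
    linear_combination (-((y:ℝ):ℂ)^2)*Complex.I_sq + hy2c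
  have hq2fac : ∀ zz:ℂ, ((A:ℝ):ℂ)*zz^2 - ((W₂:ℝ):ℂ)*zz + ((A:ℝ):ℂ)
      = ((A:ℝ):ℂ)*(zz - ζ)*(zz - conj ζ) := by
    intro zz
    linear_combination zz*hζsum - ((A:ℝ):ℂ)*hζprod
  have hclean : ∀ w:ℂ, fei12P lam a τ w
      = ((K^2*A:ℝ):ℂ) * ((w - ((z₁:ℝ):ℂ)) * (w - ((z₂:ℝ):ℂ)) * ((w - ζ) * (w - conj ζ))) := by
    intro w
    have e1 := hfac w
    rw [hq1fac w, hq2fac w] at e1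
    apply mul_left_cancel₀ hAne
    rw [hp w]
    calc ((A:ℝ):ℂ) * (((K^2:ℝ):ℂ) * (((A:ℝ):ℂ)*w^4 + ((4*q*τ:ℝ):ℂ)*w^3 + ((2*(τ^2-P^2):ℝ):ℂ)*w^2
            + ((4*q*τ:ℝ):ℂ)*w + ((A:ℝ):ℂ)))
        = ((K^2:ℝ):ℂ) * (((A:ℝ):ℂ) * (((A:ℝ):ℂ)*w^4 + ((4*q*τ:ℝ):ℂ)*w^3 + ((2*(τ^2-P^2):ℝ):ℂ)*w^2
            + ((4*q*τ:ℝ):ℂ)*w + ((A:ℝ):ℂ))) := by ring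
      _ = ((K^2:ℝ):ℂ) * (((A:ℝ):ℂ)*(w - ((z₁:ℝ):ℂ))*(w - ((z₂:ℝ):ℂ))
            * (((A:ℝ):ℂ)*(w - ζ)*(w - conj ζ))) := by rw [e1]
      _ = ((A:ℝ):ℂ) * (((K^2*A:ℝ):ℂ)
            * ((w - ((z₁:ℝ):ℂ)) * (w - ((z₂:ℝ):ℂ)) * ((w - ζ) * (w - conj ζ)))) := by
          push_cast; ring
  -- properties of the roots
  have hN0 : 0 < q*τ + R + τ*sg := by
    have h10 := mul_nonneg hτ0.le hsg0
    have h11 := mul_pos hq0 hτ0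
    linarith [hR1]
  have hAR : A < q*τ + R := by
    have hkey : R^2 - (A - q*τ)^2 = A*τ^2*(2*μ-1) := by
      linear_combination hR2 + (-A)*hA + (2*A*τ)*hq
    have hpos : 0 < A*τ^2*(2*μ-1) := mul_pos (mul_pos hA0 (pow_pos hτ0 2)) hm0
    rcases le_or_gt R (A - q*τ) with hcase | hcase
    · exfalso
      have h12 : R^2 ≤ (A-q*τ)^2 := pow_le_pow_left₀ hR0 hcase 2
      linarith
    · linarith
  have habs1 : ‖((z₁:ℝ):ℂ)‖ = (q*τ + R + τ*sg)/A := by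
    rw [Complex.norm_real, Real.norm_eq_abs, hz₁, abs_neg, abs_of_pos (div_pos hN0 hA0)]
  have h1lt : 1 < (q*τ + R + τ*sg)/A := by
    rw [lt_div_iff₀ hA0]
    have := mul_nonneg hτ0.le hsg0
    linarith [hAR]
  have habs1R : 1 < |z₁| := by
    rw [hz₁, abs_neg, abs_of_pos (div_pos hN0 hA0)]
    exact h1lt
  have habs2R : |z₂| ≤ 1 := by
    have hmz : |z₁| * |z₂| = 1 := by rw [← abs_mul, hz₁z₂, abs_one]
    have hz₂eq : |z₂| = 1/|z₁| := by
      rw [eq_div_iff (by linarith : |z₁| ≠ 0)]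
      linarith [hmz]
    rw [hz₂eq]
    rw [div_le_one (by linarith)]
    linarith
  have habsζ : ‖ζ‖ = 1 := by
    rw [hζ, Complex.norm_add_mul_I]
    rw [show x^2 + y^2 = 1 by linarith [hy2]]
    exact Real.sqrt_one
  -- final assembly
  refine ⟨((z₁:ℝ):ℂ), ?_, ?_, ?_, ?_⟩
  · rw [hclean]; simp
  · intro w hw
    rw [hclean w] at hw
    have hKAne : ((K^2*A:ℝ):ℂ) ≠ 0 := by
      exact_mod_cast ne_of_gt (mul_pos (pow_pos hK0 2) hA0)
    have hprod := (mul_eq_zero.mp hw).resolve_left hKAne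
    rcases mul_eq_zero.mp hprod with h12 | hzz
    · rcases mul_eq_zero.mp h12 with h1' | h2'
      · rw [sub_eq_zero.mp h1']
      · rw [sub_eq_zero.mp h2', Complex.norm_real, Real.norm_eq_abs, habs1]
        calc |z₂| ≤ 1 := habs2R
          _ ≤ (q*τ + R + τ*sg)/A := le_of_lt h1lt
    · rcases mul_eq_zero.mp hzz with h1' | h2'
      · rw [sub_eq_zero.mp h1', habsζ, habs1]
        exact le_of_lt h1lt
      · rw [sub_eq_zero.mp h2', Complex.norm_conj, habsζ, habs1]
        exact le_of_lt h1lt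
  · -- error bound
    have hrw : 2*lam*(‖a‖)^2 - 1 = 2*μ-1 := by rw [hμdef]; ring
    rw [show (2:ℝ) * lam * ‖a‖ ^ 2 - 1 = 2*μ-1 from hrw, ← hsmdef]
    rw [← Complex.ofReal_sub, Complex.norm_real, Real.norm_eq_abs]
    have habs_sg : |sg - sm| * sm ≤ K₅*τ^2 := by
      have hd : (sg-sm)*(sg+sm) = g-(2*μ-1) := by linear_combination hsg2 - hsm2
      have h1' : |sg - sm| * (sg + sm) = |g - (2*μ-1)| := by
        rw [← hd, abs_mul, _root_.abs_of_nonneg (by linarith : (0:ℝ) ≤ sg+sm)]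
      have h2' : |g - (2*μ-1)| ≤ K₅*τ^2 := abs_le.mpr ⟨by linarith [hglb], hgub⟩
      have h3' : |sg - sm| * sm ≤ |sg - sm| * (sg + sm) :=
        mul_le_mul_of_nonneg_left (by linarith) (abs_nonneg _)
      linarith
    have hsgsm : |sg - sm| ≤ (K₅/sm)*τ^2 := by
      rw [show (K₅/sm)*τ^2 = (K₅*τ^2)/sm by ring, le_div_iff₀ hsm0]
      exact habs_sg
    have hc1 : |q*τ + R - A| ≤ (μ+K₄+K₃)*τ^2 := by
      apply abs_le.mpr
      constructor
      · have h10 := mul_pos hq0 hτ0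
        have h0 : 0 ≤ (μ+K₄)*τ^2 := mul_nonneg (by linarith) (sq_nonneg τ)
        linarith [hAub, hR1, h10, h0]
      · have h0 : 0 ≤ K₃*τ^2 := mul_nonneg hK₃0.le (sq_nonneg τ)
        have hqt : q*τ = μ*τ^2 := by rw [hq]; ring
        linarith [hRub, hA1, hqt, h0]
    have hz₁e : z₁ - (-(1+τ*sm)) = ((1+τ*sm)*A - (q*τ+R+τ*sg))/A := by
      rw [hz₁]; field_simp; ring
    rw [hz₁e, abs_div, abs_of_pos hA0, div_le_iff₀ hA0]
    have hsmA : 0 ≤ sm*(A-1) := mul_nonneg hsm0.le (by linarith)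
    have htri : |(1+τ*sm)*A - (q*τ+R+τ*sg)| ≤ |q*τ+R-A| + τ*|sm-sg| + τ*(sm*(A-1)) := by
      rw [show (1+τ*sm)*A - (q*τ+R+τ*sg) = -(q*τ+R-A) + τ*(sm-sg) + τ*(sm*(A-1)) by ring]
      calc |(-(q*τ+R-A)) + τ*(sm-sg) + τ*(sm*(A-1))|
          ≤ |(-(q*τ+R-A)) + τ*(sm-sg)| + |τ*(sm*(A-1))| := abs_add_le _ _
        _ ≤ |(-(q*τ+R-A))| + |τ*(sm-sg)| + |τ*(sm*(A-1))| := by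
            linarith [abs_add_le (-(q*τ+R-A)) (τ*(sm-sg))]
        _ = |q*τ+R-A| + τ*|sm-sg| + τ*(sm*(A-1)) := by
            rw [abs_neg, abs_mul, abs_mul, _root_.abs_of_pos hτ0, _root_.abs_of_nonneg hsmA]
    have hsmsg : |sm - sg| ≤ (K₅/sm)*τ^2 := by rw [abs_sub_comm]; exact hsgsm
    have hXnn : 0 ≤ (K₅/sm)*τ^2 := mul_nonneg (div_pos hK₅0 hsm0).le (sq_nonneg τ)
    have hτ3 : τ*((K₅/sm)*τ^2) ≤ (K₅/sm)*τ^2 := by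
      have := mul_le_mul_of_nonneg_right hτ1 hXnn
      linarith [this]
    have hA1' : τ*(sm*(A-1)) ≤ sm*K₃*τ^2 := by
      have h0 : sm*(A-1) ≤ sm*(K₃*τ^2) :=
        mul_le_mul_of_nonneg_left (by linarith [hAub]) hsm0.le
      have hnn : 0 ≤ sm*(K₃*τ^2) :=
        mul_nonneg hsm0.le (mul_nonneg hK₃0.le (sq_nonneg τ))
      have h1' : τ*(sm*(K₃*τ^2)) ≤ 1*(sm*(K₃*τ^2)) := mul_le_mul_of_nonneg_right hτ1 hnn
      have h2' : τ*(sm*(A-1)) ≤ τ*(sm*(K₃*τ^2)) := mul_le_mul_of_nonneg_left h0 hτ0.le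
      linarith [h1', h2']
    have ht2 : τ*|sm-sg| ≤ τ*((K₅/sm)*τ^2) := mul_le_mul_of_nonneg_left hsmsg hτ0.le
    have hfin : |(1+τ*sm)*A - (q*τ+R+τ*sg)| ≤ (μ+K₄+K₃+K₅/sm+sm*K₃+1)*τ^2 := by
      linarith [htri, hc1, hτ3, hA1', sq_nonneg τ, ht2]
    calc |(1+τ*sm)*A - (q*τ+R+τ*sg)| ≤ (μ+K₄+K₃+K₅/sm+sm*K₃+1)*τ^2 := hfin
      _ = (μ+K₄+K₃+K₅/sm+sm*K₃+1)*τ^2 * 1 := by ring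
      _ ≤ (μ+K₄+K₃+K₅/sm+sm*K₃+1)*τ^2 * A :=
          mul_le_mul_of_nonneg_left hA1 (mul_nonneg hC0.le (sq_nonneg τ))
  · rw [habs1]; exact h1lt
end

section
/- Let p(z) = z³ + conj(g)z² + gz + f with |f| = 1. If |g| ≤ 1 then all roots of p lie on the unit circle; if |g| > 3 then p has a root off the unit circle. (Sufficiency of |g| ≤ 1 and necessity of |g| ≤ 3 for the stability of the self-reciprocal cubic.) -/
open Complex ComplexConjugate Polynomial

/-- For the self-reciprocal cubic `p(z) = z³ + conj(g)z² + gz + f` with `|f| = 1`: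
if `|g| ≤ 1` then all roots of `p` lie on the unit circle, while if `|g| > 3` then `p`
has a root off the unit circle. -/
theorem stmt_14 (f g : ℂ) (hf : ‖f‖ = 1)
    (hsr : ∀ z : ℂ, z ≠ 0 → z ^ 3 + conj g * z ^ 2 + g * z + f = 0 →
      ((conj z)⁻¹) ^ 3 + conj g * ((conj z)⁻¹) ^ 2 + g * (conj z)⁻¹ + f = 0) :
    (‖g‖ ≤ 1 →
        ∀ z : ℂ, z ^ 3 + conj g * z ^ 2 + g * z + f = 0 → ‖z‖ = 1)
    ∧ (3 < ‖g‖ →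
        ∃ z : ℂ, z ^ 3 + conj g * z ^ 2 + g * z + f = 0 ∧ ‖z‖ ≠ 1) := by
  set P : Polynomial ℂ := X^3 + C (conj g) * X^2 + C g * X + C f with hPdef
  have hm : P.Monic := by unfold P; monicity!
  have hdeg : P.natDegree = 3 := by unfold P; compute_degree!
  have hnc : P.nextCoeff = conj g := by
    rw [nextCoeff, hdeg]
    simp [hPdef, coeff_one, coeff_X]
  have hc0 : P.coeff 0 = f := by simp [hPdef, coeff_one, coeff_X]
  have hev : ∀ z : ℂ, P.eval z = z ^ 3 + conj g * z ^ 2 + g * z + f := by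
    intro z; simp [hPdef]
  have hP0 : P ≠ 0 := hm.ne_zero
  have hsplits : P.Splits := IsAlgClosed.splits P
  have hcard : Multiset.card P.roots = 3 := by
    rw [splits_iff_card_roots.mp hsplits, hdeg]
  have hroot : ∀ z : ℂ, (z ^ 3 + conj g * z ^ 2 + g * z + f = 0) ↔ z ∈ P.roots := by
    intro z
    rw [mem_roots hP0, IsRoot, hev z]
  have hsum : P.roots.sum = -(conj g) := by
    have := hsplits.nextCoeff_eq_neg_sum_roots_of_monic hm
    rw [hnc] at this; linear_combination this
  have hprod : P.roots.prod = -f := by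
    have := hsplits.coeff_zero_eq_prod_roots_of_monic hm
    rw [hc0, hdeg] at this
    linear_combination this
  constructor
  · intro hg z hz
    by_contra hne
    have hz0 : z ≠ 0 := by
      rintro rfl
      simp at hz
      rw [hz] at hf; simp at hf
    have hr0 : 0 < ‖z‖ := norm_pos_iff.mpr hz0
    set w : ℂ := (conj z)⁻¹ with hw
    have hwroot : w ^ 3 + conj g * w ^ 2 + g * w + f = 0 := hsr z hz0 hz
    have hwabs : ‖w‖ = (‖z‖)⁻¹ := by
      simp [hw]
    have hwz : w ≠ z := by
      intro h
      apply hne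
      have h1 : (‖z‖)⁻¹ = ‖z‖ := by rw [← hwabs, h]
      have h2 : ‖z‖ * ‖z‖ = 1 := by
        field_simp at h1
        nlinarith [h1]
      nlinarith
    have hzm : z ∈ P.roots := (hroot z).mp hz
    have hwm : w ∈ P.roots.erase z :=
      (Multiset.mem_erase_of_ne hwz).mpr ((hroot w).mp hwroot)
    obtain ⟨t, ht⟩ : ∃ t, (P.roots.erase z).erase w = {t} := by
      apply Multiset.card_eq_one.mp
      have h1 := Multiset.card_erase_of_mem hwm
      have h2 := Multiset.card_erase_of_mem hzm
      rw [h2, hcard] at h1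
      simpa using h1
    have hroots : P.roots = z ::ₘ w ::ₘ {t} := by
      rw [← ht, Multiset.cons_erase hwm, Multiset.cons_erase hzm]
    rw [hroots] at hsum hprod
    simp only [Multiset.sum_cons, Multiset.prod_cons, Multiset.sum_singleton,
      Multiset.prod_singleton] at hsum hprod
    -- |t| = 1
    have habs : ‖z‖ * ((‖z‖)⁻¹ * ‖t‖) = 1 := by
      have := congrArg (‖·‖) hprod
      simpa [norm_mul, hwabs, hf] using this
    have htabs : ‖t‖ = 1 := by
      field_simp at habs
      nlinarith [habs, hr0]
    -- |z + w| * |z| = |z|^2 + 1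
    have hmc : z * conj z = ((‖z‖ : ℂ)) ^ 2 := by
      rw [Complex.mul_conj]
      push_cast
      rw [← Complex.sq_norm]
      push_cast
      ring
    have hkey : (z + w) * conj z = ((‖z‖ : ℂ)) ^ 2 + 1 := by
      have hcz : conj z ≠ 0 := by simpa using hz0
      rw [hw]
      field_simp
      linear_combination hmc
    have h5 : ‖z + w‖ * ‖z‖ = ‖z‖ ^ 2 + 1 := by
      have := congrArg (‖·‖) hkey
      rw [norm_mul, Complex.norm_conj] at this
      rw [this]
      have : ((‖z‖ : ℂ)) ^ 2 + 1 = ((‖z‖ ^ 2 + 1 : ℝ) : ℂ) := by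
        push_cast; ring
      rw [this, Complex.norm_of_nonneg (by positivity)]
    have h6 : ‖z + w‖ ≤ 2 := by
      have he : z + w = -(conj g) - t := by linear_combination hsum
      rw [he]
      have he2 : -(conj g) - t = -(conj g + t) := by ring
      rw [he2, norm_neg]
      calc ‖conj g + t‖ ≤ ‖conj g‖ + ‖t‖ :=
            norm_add_le _ _
        _ = ‖g‖ + 1 := by rw [Complex.norm_conj, htabs]
        _ ≤ 2 := by linarith
    have h7 : (‖z‖ - 1) ^ 2 ≤ 0 := by nlinarith [h5, h6, hr0]
    exact hne (by nlinarith [sq_nonneg (‖z‖ - 1), h7])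
  · intro hg
    by_contra h
    push_neg at h
    obtain ⟨a, b, c, habc⟩ := Multiset.card_eq_three.mp hcard
    have ha : ‖a‖ = 1 := h a ((hroot a).mpr (by rw [habc]; simp))
    have hb : ‖b‖ = 1 := h b ((hroot b).mpr (by rw [habc]; simp))
    have hc : ‖c‖ = 1 := h c ((hroot c).mpr (by rw [habc]; simp))
    rw [habc] at hsum
    simp only [Multiset.insert_eq_cons, Multiset.sum_cons, Multiset.sum_singleton] at hsum
    have hle : ‖a + (b + c)‖ ≤ 3 := by
      calc ‖a + (b + c)‖ ≤ ‖a‖ + ‖b + c‖ :=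
            norm_add_le _ _
        _ ≤ ‖a‖ + (‖b‖ + ‖c‖) := by
            have := norm_add_le b c; linarith
        _ = 3 := by rw [ha, hb, hc]; norm_num
    rw [hsum] at hle
    simp [Complex.norm_conj] at hle
    linarith
end

section
/- The modified two-parameter scheme's dispersion relation holds: the plane wave V^n(x) = a·exp(i(kx − ωnτ)) satisfies i(V^{n+1} − V^{n−1})/(2τ) + (θ/2·V^{n+1}_{xx} + (1−θ)V^n_{xx} + θ/2·V^{n−1}_{xx}) = (λγ/2)|V^n|²(V^{n+1} + V^{n−1}) + (λ(1−γ)/2)(V^n)²(conj(V)^{n+1} + conj(V)^{n−1}) if and only if sin(ωτ) = K²(θcos(ωτ) + (1−θ)) + q·cos(ωτ), where K = k√τ and q = λτ|a|². -/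
open Complex ComplexConjugate

lemma myderiv (A b d : ℂ) :
    deriv (fun x : ℝ => A * Complex.exp (b * (x:ℂ) + d))
      = fun y : ℝ => b * A * Complex.exp (b * (y:ℂ) + d) := by
  funext y
  have h1 : HasDerivAt (fun x : ℝ => b * (x:ℂ) + d) b y := by
    simpa using ((Complex.ofRealCLM.hasDerivAt (x := y)).const_mul b).add_const d
  have h2 := (h1.cexp.const_mul A).deriv
  rw [h2]; ring

lemma myiter2 (A b d : ℂ) (x : ℝ) :
    iteratedDeriv 2 (fun x : ℝ => A * Complex.exp (b * (x:ℂ) + d)) x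
      = b ^ 2 * (A * Complex.exp (b * (x:ℂ) + d)) := by
  have h2 : (2:ℕ) = 1 + 1 := rfl
  rw [h2, iteratedDeriv_succ, iteratedDeriv_one, myderiv A b d, myderiv (b*A) b d]
  ring


/-- The plane wave `V^n(x) = a·exp(i(kx − ωnτ))` (with real amplitude `a > 0`)
satisfies the modified two-parameter conservative scheme
`i(V^{n+1} − V^{n−1})/(2τ) + (θ/2·V^{n+1}_{xx} + (1−θ)V^n_{xx} + θ/2·V^{n−1}_{xx})
 = (λγ/2)|V^n|²(V^{n+1} + V^{n−1}) + (λ(1−γ)/2)(V^n)²(conj V^{n+1} + conj V^{n−1})`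
if and only if `sin(ωτ) = K²(θcos(ωτ) + (1−θ)) + q·cos(ωτ)`, where `K² = k²τ` and
`q = λτ|a|²`. -/
theorem stmt_19 (θ γ lam k ω τ : ℝ) (hτ : 0 < τ) (a : ℝ) (ha : 0 < a)
    (V : ℤ → ℝ → ℂ)
    (hV : ∀ (n : ℤ) (x : ℝ),
      V n x = (a : ℂ) * Complex.exp (Complex.I * ((k * x - ω * (n : ℝ) * τ : ℝ) : ℂ))) :
    (∀ (n : ℤ) (x : ℝ),
      Complex.I * (V (n + 1) x - V (n - 1) x) / (2 * (τ : ℂ))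
        + (((θ / 2 : ℝ) : ℂ) * iteratedDeriv 2 (V (n + 1)) x
            + (((1 - θ) : ℝ) : ℂ) * iteratedDeriv 2 (V n) x
            + ((θ / 2 : ℝ) : ℂ) * iteratedDeriv 2 (V (n - 1)) x)
      = ((lam * γ / 2 : ℝ) : ℂ) * ((‖V n x‖ ^ 2 : ℝ) : ℂ) *
            (V (n + 1) x + V (n - 1) x)
          + ((lam * (1 - γ) / 2 : ℝ) : ℂ) * (V n x) ^ 2 *
            (conj (V (n + 1) x) + conj (V (n - 1) x)))
    ↔ Real.sin (ω * τ)
        = k ^ 2 * τ * (θ * Real.cos (ω * τ) + (1 - θ))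
          + lam * τ * a ^ 2 * Real.cos (ω * τ) := by
  have hτ' : τ ≠ 0 := ne_of_gt hτ
  suffices key : ∀ (n : ℤ) (x : ℝ),
      (Complex.I * (V (n + 1) x - V (n - 1) x) / (2 * (τ : ℂ))
        + (((θ / 2 : ℝ) : ℂ) * iteratedDeriv 2 (V (n + 1)) x
            + (((1 - θ) : ℝ) : ℂ) * iteratedDeriv 2 (V n) x
            + ((θ / 2 : ℝ) : ℂ) * iteratedDeriv 2 (V (n - 1)) x)
      = ((lam * γ / 2 : ℝ) : ℂ) * ((‖V n x‖ ^ 2 : ℝ) : ℂ) *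
            (V (n + 1) x + V (n - 1) x)
          + ((lam * (1 - γ) / 2 : ℝ) : ℂ) * (V n x) ^ 2 *
            (conj (V (n + 1) x) + conj (V (n - 1) x)))
      ↔ Real.sin (ω * τ)
        = k ^ 2 * τ * (θ * Real.cos (ω * τ) + (1 - θ))
          + lam * τ * a ^ 2 * Real.cos (ω * τ) by
    exact ⟨fun h => (key 0 0).mp (h 0 0), fun h n x => (key n x).mpr h⟩
  intro n x
  set z : ℂ := Complex.I * ((k * x - ω * (n : ℝ) * τ : ℝ) : ℂ) with hz
  set w : ℂ := Complex.I * ((ω * τ : ℝ) : ℂ) with hw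
  -- second derivatives
  have hd2 : ∀ m : ℤ, iteratedDeriv 2 (V m) x = -(k:ℂ)^2 * V m x := by
    intro m
    have hfun : V m = fun y : ℝ =>
        (a:ℂ) * Complex.exp (Complex.I * (k:ℂ) * (y:ℂ) + -(Complex.I * ((ω * (m:ℝ) * τ : ℝ) : ℂ))) := by
      funext y
      rw [hV]
      rw [show Complex.I * ((k * y - ω * (m:ℝ) * τ : ℝ) : ℂ)
          = Complex.I * (k:ℂ) * (y:ℂ) + -(Complex.I * ((ω * (m:ℝ) * τ : ℝ) : ℂ)) by push_cast; ring]
    rw [hfun, myiter2]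
    rw [mul_pow, Complex.I_sq]
    ring
  -- plane wave shift identities
  have hW : V n x = (a:ℂ) * Complex.exp z := by rw [hV n x, hz]
  have hp : V (n + 1) x = (a:ℂ) * (Complex.exp z * Complex.exp (-w)) := by
    rw [hV, ← Complex.exp_add]
    rw [show z + -w = Complex.I * ((k * x - ω * ((n + 1 : ℤ) : ℝ) * τ : ℝ) : ℂ) by
      rw [hz, hw]; push_cast; ring]
  have hm : V (n - 1) x = (a:ℂ) * (Complex.exp z * Complex.exp w) := by
    rw [hV, ← Complex.exp_add]
    rw [show z + w = Complex.I * ((k * x - ω * ((n - 1 : ℤ) : ℝ) * τ : ℝ) : ℂ) by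
      rw [hz, hw]; push_cast; ring]
  have hconj : ∀ m : ℤ, conj (V m x)
      = (a:ℂ) * Complex.exp (-(Complex.I * ((k * x - ω * (m:ℝ) * τ : ℝ) : ℂ))) := by
    intro m
    rw [hV, map_mul, Complex.conj_ofReal, ← Complex.exp_conj]
    congr 2
    rw [map_mul, Complex.conj_I, Complex.conj_ofReal]
    ring
  have hcp : conj (V (n + 1) x) = (a:ℂ) * (Complex.exp (-z) * Complex.exp w) := by
    rw [hconj, ← Complex.exp_add]
    congr 2
    rw [hz, hw]; push_cast; ring
  have hcm : conj (V (n - 1) x) = (a:ℂ) * (Complex.exp (-z) * Complex.exp (-w)) := by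
    rw [hconj, ← Complex.exp_add]
    congr 2
    rw [hz, hw]; push_cast; ring
  have habs : ‖V n x‖ = a := by
    rw [hV, norm_mul, Complex.norm_of_nonneg ha.le, Complex.norm_exp]
    simp [Complex.mul_re]
  have hu : Complex.exp w = ((Real.cos (ω * τ) : ℝ) : ℂ) + ((Real.sin (ω * τ) : ℝ) : ℂ) * Complex.I := by
    rw [show w = ((ω * τ : ℝ) : ℂ) * Complex.I by rw [hw]; ring, Complex.exp_mul_I,
      ← Complex.ofReal_cos, ← Complex.ofReal_sin]
  have hv : Complex.exp (-w) = ((Real.cos (ω * τ) : ℝ) : ℂ) - ((Real.sin (ω * τ) : ℝ) : ℂ) * Complex.I := by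
    rw [show -w = ((-(ω * τ) : ℝ) : ℂ) * Complex.I by rw [hw]; push_cast; ring, Complex.exp_mul_I,
      ← Complex.ofReal_cos, ← Complex.ofReal_sin, Real.cos_neg, Real.sin_neg]
    push_cast; ring
  have hEN : Complex.exp z * Complex.exp (-z) = 1 := by
    rw [← Complex.exp_add]; simp
  rw [hd2 (n+1), hd2 n, hd2 (n-1), habs, hcp, hcm, hp, hm, hW, hu, hv]
  constructor
  · intro h
    push_cast at h
    have hane : (a:ℂ) * Complex.exp z ≠ 0 :=
      mul_ne_zero (Complex.ofReal_ne_zero.mpr (ne_of_gt ha)) (Complex.exp_ne_zero z)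
    have h2 : ((Real.sin (ω * τ) / τ : ℝ) : ℂ) * ((a:ℂ) * Complex.exp z)
        = ((k ^ 2 * (θ * Real.cos (ω * τ) + (1 - θ)) + lam * a ^ 2 * Real.cos (ω * τ) : ℝ) : ℂ)
            * ((a:ℂ) * Complex.exp z) := by
      push_cast
      linear_combination h
        + ((a:ℂ) * Complex.sin ((ω:ℂ) * (τ:ℂ)) * Complex.exp z / (τ:ℂ)) * Complex.I_sq
        + ((lam:ℂ) * (1 - (γ:ℂ)) * (a:ℂ)^3 * Complex.cos ((ω:ℂ) * (τ:ℂ)) * Complex.exp z) * hEN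
    have h3 := mul_right_cancel₀ hane h2
    have h4 : Real.sin (ω * τ) / τ
        = k ^ 2 * (θ * Real.cos (ω * τ) + (1 - θ)) + lam * a ^ 2 * Real.cos (ω * τ) := by
      exact_mod_cast h3
    rw [div_eq_iff hτ'] at h4
    linear_combination h4
  · intro h
    have h4 : Real.sin (ω * τ) / τ
        = k ^ 2 * (θ * Real.cos (ω * τ) + (1 - θ)) + lam * a ^ 2 * Real.cos (ω * τ) := by
      rw [div_eq_iff hτ']; linear_combination h
    have hC : ((Real.sin (ω * τ) / τ : ℝ) : ℂ)
        = ((k ^ 2 * (θ * Real.cos (ω * τ) + (1 - θ)) + lam * a ^ 2 * Real.cos (ω * τ) : ℝ) : ℂ) := by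
      exact_mod_cast h4
    push_cast at hC ⊢
    linear_combination ((a:ℂ) * Complex.exp z) * hC
      - ((a:ℂ) * Complex.exp z * Complex.sin ((ω:ℂ) * (τ:ℂ)) / (τ:ℂ)) * Complex.I_sq
      - ((lam:ℂ) * (1 - (γ:ℂ)) * (a:ℂ)^3 * Complex.cos ((ω:ℂ) * (τ:ℂ)) * Complex.exp z) * hEN
end
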